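/- Let k be a field of characteristic p > 0. The kernel of the k-algebra homomorphism k[X,Y,Z] → k[x,y] determined by X ↦ x^p, Y ↦ y^p, Z ↦ x^p·y + x·y^p is the principal ideal generated by Z^p − X^p·Y − X·Y^p. -/

import Mathlib

open MvPolynomial

section KerAux

variable {k : Type*} [Field k] {p : ℕ}

/-- The "Frobenius-substitution" map `k[x,y] → k[x,y]`, `x ↦ x^p`, `y ↦ y^p`. -/
noncomputable def kerAuxPsi (k : Type*) [Field k] (p : ℕ) :
    MvPolynomial (Fin 2) k →ₐ[k] MvPolynomial (Fin 2) k :=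
  aeval ![X 0 ^ p, X 1 ^ p]

/-- The element `w = x^p y + x y^p`. -/
noncomputable def kerAuxW (k : Type*) [Field k] (p : ℕ) : MvPolynomial (Fin 2) k :=
  X 0 ^ p * X 1 + X 0 * X 1 ^ p

/-- Evaluation `k[x,y][T] → k[x,y]`, coefficients via `kerAuxPsi`, `T ↦ w`. -/
noncomputable def kerAuxPhi (k : Type*) [Field k] (p : ℕ) :
    Polynomial (MvPolynomial (Fin 2) k) →+* MvPolynomial (Fin 2) k :=
  Polynomial.eval₂RingHom
    ((kerAuxPsi k p) : MvPolynomial (Fin 2) k →+* MvPolynomial (Fin 2) k) (kerAuxW k p)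

/-- The polynomial `T^p - C w`. -/
noncomputable def kerAuxG (k : Type*) [Field k] (p : ℕ) :
    Polynomial (MvPolynomial (Fin 2) k) :=
  Polynomial.X ^ p - Polynomial.C (kerAuxW k p)

/-- `k[X,Y,Z] ≃ k[X,Y][Z]`, sending `X ↦ C X`, `Y ↦ C Y`, `Z ↦ T`. -/
noncomputable def kerAuxE (k : Type*) [Field k] :
    MvPolynomial (Fin 3) k ≃ₐ[k] Polynomial (MvPolynomial (Fin 2) k) :=
  (renameEquiv k (finRotate 3)).trans (MvPolynomial.finSuccEquiv k 2)

lemma kerAux_smul_finsupp_inj (hp : 0 < p) :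
    Function.Injective (fun m : Fin 2 →₀ ℕ => p • m) := by
  intro a b h
  ext i
  have := DFunLike.congr_fun h i
  simp only [Finsupp.smul_apply, smul_eq_mul] at this
  exact Nat.eq_of_mul_eq_mul_left hp this

lemma kerAuxPsi_monomial (m : Fin 2 →₀ ℕ) (a : k) :
    kerAuxPsi k p (monomial m a) = monomial (p • m) a := by
  rw [kerAuxPsi, MvPolynomial.aeval_monomial, monomial_eq]
  rw [Finsupp.prod_fintype _ _ (fun i => by simp), Finsupp.prod_fintype _ _ (fun i => by simp)]
  congr 1
  apply Finset.prod_congr rfl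
  intro i _
  fin_cases i <;> simp [pow_mul, mul_comm]

lemma kerAux_coeff_psi (q : MvPolynomial (Fin 2) k) (m : Fin 2 →₀ ℕ) (hp : 0 < p) :
    coeff (p • m) (kerAuxPsi k p q) = coeff m q := by
  conv_lhs => rw [q.as_sum, map_sum]
  rw [MvPolynomial.coeff_sum]
  simp only [kerAuxPsi_monomial, MvPolynomial.coeff_monomial,
    (kerAux_smul_finsupp_inj hp).eq_iff]
  rw [Finset.sum_ite_eq' q.support m (fun x => coeff x q)]
  split
  · rfl
  · next h => exact (MvPolynomial.notMem_support_iff.mp h).symm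

lemma kerAuxPsi_inj (hp : 0 < p) : Function.Injective (kerAuxPsi k p) := by
  intro a b h
  ext m
  rw [← kerAux_coeff_psi a m hp, ← kerAux_coeff_psi b m hp, h]

lemma kerAux_D_psi [CharP k p] (a : MvPolynomial (Fin 2) k) :
    pderiv 1 (kerAuxPsi k p a) = 0 := by
  have hp0 : ((p : MvPolynomial (Fin 2) k)) = 0 := by
    exact_mod_cast CharP.cast_eq_zero (MvPolynomial (Fin 2) k) p
  induction a using MvPolynomial.induction_on with
  | C a => simp [kerAuxPsi, algebraMap_eq, pderiv_C]
  | add f g hf hg => simp [map_add, hf, hg]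
  | mul_X f i hf =>
      have : kerAuxPsi k p (f * X i) = kerAuxPsi k p f * (X i) ^ p := by
        simp only [kerAuxPsi, map_mul, MvPolynomial.aeval_X]
        congr 1
        fin_cases i <;> simp
      rw [this, pderiv_mul, hf, pderiv_pow]
      fin_cases i <;> simp [pderiv_X, Pi.single_apply, hp0]

lemma kerAux_D_w [CharP k p] : pderiv (1 : Fin 2) (kerAuxW k p) = X 0 ^ p := by
  have hp0 : ((p : MvPolynomial (Fin 2) k)) = 0 := by
    exact_mod_cast CharP.cast_eq_zero (MvPolynomial (Fin 2) k) p
  simp [kerAuxW, pderiv_mul, pderiv_pow, pderiv_X, Pi.single_apply, hp0]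

lemma kerAux_D_Phi [CharP k p] (r : Polynomial (MvPolynomial (Fin 2) k)) :
    pderiv 1 (kerAuxPhi k p r) = X 0 ^ p * kerAuxPhi k p (Polynomial.derivative r) := by
  induction r using Polynomial.induction_on with
  | C a => simp [kerAuxPhi, kerAux_D_psi]
  | add f g hf hg => simp only [map_add, hf, hg]; ring
  | monomial n a ih =>
      have h1 : kerAuxPhi k p (Polynomial.C a * Polynomial.X ^ (n+1))
          = kerAuxPsi k p a * kerAuxW k p ^ (n+1) := by
        simp [kerAuxPhi]
      have h2 : Polynomial.derivative (Polynomial.C a * Polynomial.X ^ (n+1))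
          = Polynomial.C a *
            (Polynomial.C ((n : MvPolynomial (Fin 2) k)+1) * Polynomial.X ^ n) := by
        simp [Polynomial.derivative_X_pow]
      rw [h1, h2]
      have h3 : kerAuxPhi k p (Polynomial.C a *
            (Polynomial.C ((n : MvPolynomial (Fin 2) k)+1) * Polynomial.X ^ n))
          = kerAuxPsi k p a * ((n : MvPolynomial (Fin 2) k)+1) * kerAuxW k p ^ n := by
        simp [kerAuxPhi]; ring
      rw [h3]
      rw [Derivation.leibniz, Derivation.leibniz_pow, kerAux_D_psi, kerAux_D_w]
      simp only [smul_eq_mul, nsmul_eq_mul]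
      push_cast
      ring

lemma kerAux_key [CharP k p] (hp : 0 < p) (n : ℕ) (hn : n < p) :
    ∀ r : Polynomial (MvPolynomial (Fin 2) k),
      r.natDegree ≤ n → kerAuxPhi k p r = 0 → r = 0 := by
  induction n with
  | zero =>
      intro r hdeg h0
      rw [Polynomial.eq_C_of_natDegree_le_zero hdeg] at h0 ⊢
      have : kerAuxPsi k p (r.coeff 0) = 0 := by simpa [kerAuxPhi] using h0
      rw [show r.coeff 0 = 0 from kerAuxPsi_inj hp (by simpa using this), map_zero]
  | succ n ih =>
      intro r hdeg h0
      have hD : kerAuxPhi k p (Polynomial.derivative r) = 0 := by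
        have := kerAux_D_Phi (k := k) (p := p) r
        rw [h0, map_zero] at this
        rcases mul_eq_zero.mp this.symm with h | h
        · exact absurd h (pow_ne_zero _ (X_ne_zero 0))
        · exact h
      have hder : Polynomial.derivative r = 0 :=
        ih (Nat.lt_of_succ_lt hn) _
          (le_trans (Polynomial.natDegree_derivative_le r) (by omega)) hD
      have hcoeff : ∀ i : ℕ, r.coeff (i + 1) = 0 := by
        intro i
        by_cases hi : i + 1 ≤ n + 1
        · have := Polynomial.ext_iff.mp hder i
          rw [Polynomial.coeff_derivative, Polynomial.coeff_zero] at this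
          have hne : ((i : MvPolynomial (Fin 2) k) + 1) ≠ 0 := by
            have hpp : p.Prime := (CharP.char_is_prime_or_zero k p).resolve_right (by omega)
            rw [show ((i : MvPolynomial (Fin 2) k) + 1)
                = ((i+1 : ℕ) : MvPolynomial (Fin 2) k) by push_cast; ring]
            rw [Ne, CharP.cast_eq_zero_iff (MvPolynomial (Fin 2) k) p]
            exact fun hdvd => absurd (Nat.le_of_dvd (by omega) hdvd) (by omega)
          rcases mul_eq_zero.mp this with h | h
          · exact h
          · exact absurd h hne
        · exact Polynomial.coeff_eq_zero_of_natDegree_lt (by omega)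
      have hC : r = Polynomial.C (r.coeff 0) := by
        ext i
        cases i with
        | zero => simp
        | succ i => simp [hcoeff i]
      rw [hC] at h0 ⊢
      have : kerAuxPsi k p (r.coeff 0) = 0 := by simpa [kerAuxPhi] using h0
      rw [show r.coeff 0 = 0 from kerAuxPsi_inj hp (by simpa using this), map_zero]

lemma kerAuxPhi_G [CharP k p] (hp : 0 < p) : kerAuxPhi k p (kerAuxG k p) = 0 := by
  have hpp : p.Prime := (CharP.char_is_prime_or_zero k p).resolve_right (by omega)
  haveI := Fact.mk hpp
  haveI : ExpChar (MvPolynomial (Fin 2) k) p := ExpChar.prime hpp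
  have h : (kerAuxW k p) ^ p
      = (X 0 ^ p * X 1) ^ p + (X 0 * (X 1 : MvPolynomial (Fin 2) k) ^ p) ^ p :=
    add_pow_char _ _ _
  simp only [kerAuxG, kerAuxPhi, Polynomial.coe_eval₂RingHom, Polynomial.eval₂_sub,
    Polynomial.eval₂_pow, Polynomial.eval₂_X, Polynomial.eval₂_C, h]
  have : ((kerAuxPsi k p : MvPolynomial (Fin 2) k →+* MvPolynomial (Fin 2) k)) (kerAuxW k p)
      = (X 0 ^ p) ^ p * X 1 ^ p + X 0 ^ p * ((X 1 : MvPolynomial (Fin 2) k) ^ p) ^ p := by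
    simp [kerAuxPsi, kerAuxW]
  rw [this]
  ring

lemma kerAux_monic_G (hp : 0 < p) : (kerAuxG k p).Monic :=
  Polynomial.monic_X_pow_sub
    (by simpa using (Polynomial.degree_C_le).trans_lt (by exact_mod_cast hp))

lemma kerAux_ker_Phi [CharP k p] (hp : 0 < p) :
    RingHom.ker (kerAuxPhi k p) = Ideal.span {kerAuxG k p} := by
  apply le_antisymm
  · intro g hg
    rw [RingHom.mem_ker] at hg
    have hG := kerAux_monic_G (k := k) hp
    have hdegG : (kerAuxG k p).degree = p := by
      simpa [kerAuxG] using Polynomial.degree_X_pow_sub_C hp (kerAuxW k p)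
    have hmod : g %ₘ kerAuxG k p = g - kerAuxG k p * (g /ₘ kerAuxG k p) := by
      rw [eq_sub_iff_add_eq, Polynomial.modByMonic_add_div g _]
    have hPhimod : kerAuxPhi k p (g %ₘ kerAuxG k p) = 0 := by
      rw [hmod, map_sub, map_mul, hg, kerAuxPhi_G hp, zero_mul, sub_zero]
    have hdeg : (g %ₘ kerAuxG k p).natDegree ≤ p - 1 := by
      by_cases h0 : g %ₘ kerAuxG k p = 0
      · simp [h0]
      · have := Polynomial.degree_modByMonic_lt g hG
        rw [hdegG] at this
        have := (Polynomial.natDegree_lt_iff_degree_lt h0).mpr this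
        omega
    have hzero : g %ₘ kerAuxG k p = 0 := kerAux_key hp (p - 1) (by omega) _ hdeg hPhimod
    rw [hzero] at hmod
    rw [Ideal.mem_span_singleton]
    exact ⟨g /ₘ kerAuxG k p, by linear_combination -hmod⟩
  · rw [Ideal.span_le, Set.singleton_subset_iff]
    exact RingHom.mem_ker.mpr (kerAuxPhi_G hp)

lemma kerAuxE_X0 : kerAuxE k (X 0) = Polynomial.C (X 0) := by
  have : kerAuxE k (X 0) = MvPolynomial.finSuccEquiv k 2 (X (finRotate 3 0)) := by
    simp [kerAuxE]
  rw [this, show finRotate 3 0 = Fin.succ 0 by decide, finSuccEquiv_X_succ]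

lemma kerAuxE_X1 : kerAuxE k (X 1) = Polynomial.C (X 1) := by
  have : kerAuxE k (X 1) = MvPolynomial.finSuccEquiv k 2 (X (finRotate 3 1)) := by
    simp [kerAuxE]
  rw [this, show finRotate 3 1 = Fin.succ 1 by decide, finSuccEquiv_X_succ]

lemma kerAuxE_X2 : kerAuxE k (X 2) = Polynomial.X := by
  have : kerAuxE k (X 2) = MvPolynomial.finSuccEquiv k 2 (X (finRotate 3 2)) := by
    simp [kerAuxE]
  rw [this, show finRotate 3 2 = 0 by decide, finSuccEquiv_X_zero]

lemma kerAuxE_C (a : k) : kerAuxE k (C a) = Polynomial.C (C a) := by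
  have : kerAuxE k (C a) = MvPolynomial.finSuccEquiv k 2 (C a) := by simp [kerAuxE]
  rw [this, finSuccEquiv_apply]
  simp

lemma kerAuxPsi_X0 : kerAuxPsi k p (X 0) = X 0 ^ p := by simp [kerAuxPsi]
lemma kerAuxPsi_X1 : kerAuxPsi k p (X 1) = X 1 ^ p := by simp [kerAuxPsi]
lemma kerAuxPhi_C (r : MvPolynomial (Fin 2) k) :
    kerAuxPhi k p (Polynomial.C r) = kerAuxPsi k p r := by simp [kerAuxPhi]
lemma kerAuxPhi_X : kerAuxPhi k p Polynomial.X = kerAuxW k p := by simp [kerAuxPhi]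

lemma kerAux_comp_eq (f : MvPolynomial (Fin 3) k) :
    kerAuxPhi k p (kerAuxE k f)
      = aeval ![(X 0 : MvPolynomial (Fin 2) k) ^ p, (X 1 : MvPolynomial (Fin 2) k) ^ p,
          (X 0 : MvPolynomial (Fin 2) k) ^ p * X 1
            + X 0 * (X 1 : MvPolynomial (Fin 2) k) ^ p] f := by
  have h : (kerAuxPhi k p).comp ((kerAuxE k).toAlgHom.toRingHom) =
      ((aeval ![(X 0 : MvPolynomial (Fin 2) k) ^ p, (X 1 : MvPolynomial (Fin 2) k) ^ p,
        (X 0 : MvPolynomial (Fin 2) k) ^ p * X 1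
          + X 0 * (X 1 : MvPolynomial (Fin 2) k) ^ p]).toRingHom) := by
    apply MvPolynomial.ringHom_ext
    · intro a
      show kerAuxPhi k p (kerAuxE k (C a)) = _
      rw [kerAuxE_C, kerAuxPhi_C]
      simp [kerAuxPsi, MvPolynomial.algebraMap_eq]
    · intro i
      show kerAuxPhi k p (kerAuxE k (X i)) = aeval _ (X i)
      fin_cases i
      · show kerAuxPhi k p (kerAuxE k (X 0)) = aeval _ (X 0)
        rw [kerAuxE_X0, kerAuxPhi_C, kerAuxPsi_X0]; simp
      · show kerAuxPhi k p (kerAuxE k (X 1)) = aeval _ (X 1)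
        rw [kerAuxE_X1, kerAuxPhi_C, kerAuxPsi_X1]; simp
      · show kerAuxPhi k p (kerAuxE k (X 2)) = aeval _ (X 2)
        rw [kerAuxE_X2, kerAuxPhi_X]; simp [kerAuxW]
  exact DFunLike.congr_fun h f

lemma kerAuxE_F :
    kerAuxE k ((X 2 : MvPolynomial (Fin 3) k) ^ p - (X 0 : MvPolynomial (Fin 3) k) ^ p * X 1
      - X 0 * (X 1 : MvPolynomial (Fin 3) k) ^ p) = kerAuxG k p := by
  rw [map_sub, map_sub, map_pow, map_mul, map_mul, map_pow, map_pow,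
    kerAuxE_X0, kerAuxE_X1, kerAuxE_X2, kerAuxG, kerAuxW]
  rw [map_add, map_mul, map_mul, map_pow, map_pow]
  ring

end KerAux

/-- Let `k` be a field of characteristic `p > 0`. The kernel of the
`k`-algebra homomorphism `k[X,Y,Z] → k[x,y]` determined by `X ↦ x^p`, `Y ↦ y^p`,
`Z ↦ x^p*y + x*y^p` is the principal ideal generated by `Z^p - X^p*Y - X*Y^p`. -/
theorem ker_aeval_eq_span
    (k : Type*) [Field k] (p : ℕ) (hp : 0 < p) [CharP k p] :
    RingHom.ker (MvPolynomial.aeval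
        ![(X 0 : MvPolynomial (Fin 2) k) ^ p, (X 1 : MvPolynomial (Fin 2) k) ^ p,
          (X 0 : MvPolynomial (Fin 2) k) ^ p * X 1
            + X 0 * (X 1 : MvPolynomial (Fin 2) k) ^ p] :
      MvPolynomial (Fin 3) k →ₐ[k] MvPolynomial (Fin 2) k) =
    Ideal.span {(X 2 : MvPolynomial (Fin 3) k) ^ p
      - (X 0 : MvPolynomial (Fin 3) k) ^ p * X 1
      - X 0 * (X 1 : MvPolynomial (Fin 3) k) ^ p} := by
  set F : MvPolynomial (Fin 3) k := (X 2 : MvPolynomial (Fin 3) k) ^ p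
      - (X 0 : MvPolynomial (Fin 3) k) ^ p * X 1
      - X 0 * (X 1 : MvPolynomial (Fin 3) k) ^ p with hF
  ext f
  rw [RingHom.mem_ker, Ideal.mem_span_singleton]
  rw [← kerAux_comp_eq f]
  constructor
  · intro h0
    have hmem : kerAuxE k f ∈ RingHom.ker (kerAuxPhi k p) := RingHom.mem_ker.mpr h0
    rw [kerAux_ker_Phi hp, Ideal.mem_span_singleton] at hmem
    obtain ⟨c, hc⟩ := hmem
    refine ⟨(kerAuxE k).symm c, (kerAuxE k).injective ?_⟩
    rw [map_mul, kerAuxE_F, AlgEquiv.apply_symm_apply, hc]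
  · rintro ⟨c, rfl⟩
    rw [map_mul, kerAuxE_F, map_mul]
    rw [show kerAuxPhi k p (kerAuxG k p) = 0 from kerAuxPhi_G hp, zero_mul]
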